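/- Consider the finite one-dimensional lattice {1, …, K} with Dirichlet boundary conditions ψ₀ = ψ_{K+1} = 0, and let ε > 0, Ω > 0, λ > 0. Then the stationary equation −ε(ψ_{n−1} − 2ψ_n + ψ_{n+1}) + Ω ψ_n = λ ψ_n³ for n = 1, …, K admits a nontrivial (not identically zero) solution (ψ₁, …, ψ_K) ∈ ℝ^K. -/

import Mathlib

noncomputable section

namespace FLSaux

/-- shooting sequence: ψ₀ = 0, ψ₁ = t, recursion from the stationary equation. -/
def seq (ε Ω lam t : ℝ) : ℕ → ℝ
  | 0 => 0
  | 1 => t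
  | (n+2) => 2 * seq ε Ω lam t (n+1) - seq ε Ω lam t n
      + (Ω/ε) * seq ε Ω lam t (n+1) - (lam/ε) * (seq ε Ω lam t (n+1))^3

/-- linearized sequence (derivative in t at 0). -/
def aseq (r : ℝ) : ℕ → ℝ
  | 0 => 0
  | 1 => 1
  | (n+2) => (2 + r) * aseq r (n+1) - aseq r n

lemma aseq_pos (r : ℝ) (hr : 0 < r) : ∀ n, 0 ≤ aseq r n ∧ aseq r n < aseq r (n+1) := by
  intro n
  induction n with
  | zero => simp [aseq]
  | succ n ih =>
    obtain ⟨h0, h1⟩ := ih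
    have hpos : 0 < aseq r (n+1) := lt_of_le_of_lt h0 h1
    refine ⟨le_of_lt hpos, ?_⟩
    have : aseq r (n+2) = (2 + r) * aseq r (n+1) - aseq r n := rfl
    nlinarith

lemma seq_at_zero (ε Ω lam : ℝ) : ∀ n, seq ε Ω lam 0 n = 0 ∧ seq ε Ω lam 0 (n+1) = 0 := by
  intro n
  induction n with
  | zero => exact ⟨rfl, rfl⟩
  | succ n ih =>
    refine ⟨ih.2, ?_⟩
    show 2 * seq ε Ω lam 0 (n+1) - seq ε Ω lam 0 n
      + (Ω/ε) * seq ε Ω lam 0 (n+1) - (lam/ε) * (seq ε Ω lam 0 (n+1))^3 = 0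
    rw [ih.1, ih.2]; ring

lemma seq_cont (ε Ω lam : ℝ) :
    ∀ n, Continuous (fun t => seq ε Ω lam t n) ∧ Continuous (fun t => seq ε Ω lam t (n+1)) := by
  intro n
  induction n with
  | zero => exact ⟨continuous_const, continuous_id⟩
  | succ n ih =>
    refine ⟨ih.2, ?_⟩
    have : (fun t => seq ε Ω lam t (n+2)) = fun t =>
        2 * seq ε Ω lam t (n+1) - seq ε Ω lam t n
        + (Ω/ε) * seq ε Ω lam t (n+1) - (lam/ε) * (seq ε Ω lam t (n+1))^3 := rfl
    rw [this]
    exact (((continuous_const.mul ih.2).sub ih.1).add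
      (continuous_const.mul ih.2)).sub (continuous_const.mul (ih.2.pow 3))

lemma seq_hasDerivAt (ε Ω lam : ℝ) :
    ∀ n, HasDerivAt (fun t => seq ε Ω lam t n) (aseq (Ω/ε) n) 0 ∧
      HasDerivAt (fun t => seq ε Ω lam t (n+1)) (aseq (Ω/ε) (n+1)) 0 := by
  intro n
  induction n with
  | zero =>
    constructor
    · exact hasDerivAt_const (0:ℝ) (0:ℝ)
    · exact hasDerivAt_id (0:ℝ)
  | succ n ih =>
    refine ⟨ih.2, ?_⟩
    have h : (fun t => seq ε Ω lam t (n+2)) = fun t =>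
        2 * seq ε Ω lam t (n+1) - seq ε Ω lam t n
        + (Ω/ε) * seq ε Ω lam t (n+1) - (lam/ε) * (seq ε Ω lam t (n+1))^3 := rfl
    rw [h]
    have hD := (((ih.2.const_mul 2).sub ih.1).add
      (ih.2.const_mul (Ω/ε))).sub (((ih.2.pow 3)).const_mul (lam/ε))
    refine HasDerivAt.congr_deriv hD (Eq.symm ?_)
    have h0 : seq ε Ω lam 0 (n+1) = 0 := (seq_at_zero ε Ω lam n).2
    show aseq (Ω/ε) (n+2) = _
    have : aseq (Ω/ε) (n+2) = (2 + Ω/ε) * aseq (Ω/ε) (n+1) - aseq (Ω/ε) n := rfl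
    rw [this, h0]
    ring

/-- the stationary equation holds automatically along the recursion. -/
lemma seq_eq (ε Ω lam t : ℝ) (hε : ε ≠ 0) (m : ℕ) :
    -ε * (seq ε Ω lam t m - 2 * seq ε Ω lam t (m+1) + seq ε Ω lam t (m+2))
      + Ω * seq ε Ω lam t (m+1) = lam * (seq ε Ω lam t (m+1))^3 := by
  have h : seq ε Ω lam t (m+2) = 2 * seq ε Ω lam t (m+1) - seq ε Ω lam t m
      + (Ω/ε) * seq ε Ω lam t (m+1) - (lam/ε) * (seq ε Ω lam t (m+1))^3 := rfl
  rw [h]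
  field_simp
  ring

lemma seq_down (ε Ω lam t : ℝ) :
    ∀ j, seq ε Ω lam t (j+1) = 0 → seq ε Ω lam t (j+2) = 0 → seq ε Ω lam t 1 = 0 := by
  intro j
  induction j with
  | zero => intro h _; exact h
  | succ j ih =>
    intro h1 h2
    have h : seq ε Ω lam t (j+3) = 2 * seq ε Ω lam t (j+2) - seq ε Ω lam t (j+1)
        + (Ω/ε) * seq ε Ω lam t (j+2) - (lam/ε) * (seq ε Ω lam t (j+2))^3 := rfl
    rw [h1, h2] at h
    have hj : seq ε Ω lam t (j+1) = 0 := by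
      have := h; nlinarith [h]
    exact ih hj h1

/-- key existence: a positive shooting parameter hitting zero at K+1. -/
lemma key (K : ℕ) (hK : 1 ≤ K) (ε Ω lam : ℝ) (hε : 0 < ε) (hΩ : 0 < Ω) (hlam : 0 < lam) :
    ∃ T : ℝ, 0 < T ∧ seq ε Ω lam T (K+1) = 0 := by
  have hr : 0 < Ω/ε := div_pos hΩ hε
  set A : Set ℝ := {t | 0 < t ∧ ∀ n ∈ Finset.Icc 1 (K+1), 0 < seq ε Ω lam t n} with hA
  -- A is nonempty
  have hslope : ∀ n ∈ Finset.Icc 1 (K+1), ∀ᶠ t in nhdsWithin (0:ℝ) (Set.Ioi 0),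
      0 < seq ε Ω lam t n := by
    intro n hn
    simp only [Finset.mem_Icc] at hn
    obtain ⟨n, rfl⟩ : ∃ m, n = m + 1 := ⟨n - 1, by omega⟩
    have hd := (seq_hasDerivAt ε Ω lam n).2
    have hapos : 0 < aseq (Ω/ε) (n+1) :=
      lt_of_le_of_lt (aseq_pos _ hr n).1 (aseq_pos _ hr n).2
    rw [hasDerivAt_iff_tendsto_slope] at hd
    have hev : ∀ᶠ t in nhdsWithin (0:ℝ) {(0:ℝ)}ᶜ,
        0 < slope (fun t => seq ε Ω lam t (n+1)) 0 t :=
      hd.eventually (eventually_gt_nhds hapos)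
    have hmono : nhdsWithin (0:ℝ) (Set.Ioi 0) ≤ nhdsWithin (0:ℝ) {(0:ℝ)}ᶜ := by
      apply nhdsWithin_mono
      intro x hx
      exact ne_of_gt hx
    filter_upwards [hmono hev, self_mem_nhdsWithin] with t ht ht0
    have ht0' : (0:ℝ) < t := ht0
    have hs : slope (fun t => seq ε Ω lam t (n+1)) 0 t
        = seq ε Ω lam t (n+1) / t := by
      rw [slope_def_field]
      rw [(seq_at_zero ε Ω lam n).2]
      ring_nf
    rw [hs] at ht
    have := mul_pos ht ht0'
    calc (0:ℝ) < seq ε Ω lam t (n+1) / t * t := this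
    _ = seq ε Ω lam t (n+1) := by field_simp
  have hne : A.Nonempty := by
    have hall : ∀ᶠ t in nhdsWithin (0:ℝ) (Set.Ioi 0),
        ∀ n ∈ Finset.Icc 1 (K+1), 0 < seq ε Ω lam t n :=
      (Filter.eventually_all_finset _).mpr hslope
    have hpos : ∀ᶠ t in nhdsWithin (0:ℝ) (Set.Ioi 0), (0:ℝ) < t := self_mem_nhdsWithin
    obtain ⟨t, ht1, ht2⟩ := (hall.and hpos).exists
    exact ⟨t, ht2, ht1⟩
  -- A is bounded above
  have hbdd : BddAbove A := by
    refine ⟨Real.sqrt ((2*ε+Ω)/lam), ?_⟩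
    rintro t ⟨ht0, ht⟩
    by_contra hlt
    push_neg at hlt
    have h2 : 0 < seq ε Ω lam t 2 := ht 2 (by simp [Finset.mem_Icc]; omega)
    have hs2 : seq ε Ω lam t 2 = 2*t - 0 + (Ω/ε)*t - (lam/ε)*t^3 := rfl
    have hsq : (2*ε+Ω)/lam < t^2 := by
      have hnn : 0 ≤ (2*ε+Ω)/lam := by positivity
      nlinarith [Real.sq_sqrt hnn, Real.sqrt_nonneg ((2*ε+Ω)/lam)]
    have : lam * t^2 > 2*ε+Ω := by
      rw [div_lt_iff₀ hlam] at hsq; linarith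
    rw [hs2] at h2
    have hε' : ε ≠ 0 := ne_of_gt hε
    have : seq ε Ω lam t 2 * ε = t * (2*ε + Ω - lam * t^2) := by
      rw [hs2]; field_simp; ring
    nlinarith [mul_pos h2 hε]
  set T := sSup A with hT
  have hne' := hne
  obtain ⟨t₁, ht₁⟩ := hne'
  have hT0 : 0 < T := lt_of_lt_of_le ht₁.1 (le_csSup hbdd ht₁)
  -- nonnegativity at T
  have hTcl : T ∈ closure A := csSup_mem_closure hne hbdd
  have hTnn : ∀ n, n ≤ K+1 → 0 ≤ seq ε Ω lam T n := by
    intro n hn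
    rcases Nat.eq_zero_or_pos n with h0 | h0
    · subst h0; exact le_of_eq rfl
    have hcl : IsClosed {t : ℝ | 0 ≤ seq ε Ω lam t n} := by
      have := (seq_cont ε Ω lam n).1
      exact isClosed_le continuous_const this
    have hsub : A ⊆ {t : ℝ | 0 ≤ seq ε Ω lam t n} := by
      rintro t ⟨_, ht⟩
      exact le_of_lt (ht n (by simp [Finset.mem_Icc]; omega))
    exact (closure_minimal hsub hcl) hTcl
  -- some coordinate vanishes at T
  have hvan : ∃ m, 1 ≤ m ∧ m ≤ K+1 ∧ seq ε Ω lam T m = 0 := by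
    by_contra hcon
    push_neg at hcon
    have hTin : ∀ n ∈ Finset.Icc 1 (K+1), 0 < seq ε Ω lam T n := by
      intro n hn
      simp only [Finset.mem_Icc] at hn
      exact lt_of_le_of_ne (hTnn n hn.2) (Ne.symm (hcon n hn.1 hn.2))
    -- openness gives a bigger element of A
    set U : Set ℝ := ⋂ n ∈ Finset.Icc 1 (K+1), {t : ℝ | 0 < seq ε Ω lam t n} with hU
    have hUopen : IsOpen U := by
      apply isOpen_biInter_finset
      intro n _
      exact isOpen_lt continuous_const (seq_cont ε Ω lam n).1
    have hTU : T ∈ U := by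
      simp only [hU, Set.mem_iInter]
      intro n hn
      exact hTin n hn
    obtain ⟨δ, hδ0, hball⟩ := Metric.isOpen_iff.1 hUopen T hTU
    have hmem : T + δ/2 ∈ A := by
      have hball' : T + δ/2 ∈ U := by
        apply hball
        rw [Metric.mem_ball, Real.dist_eq, show T + δ/2 - T = δ/2 by ring,
          abs_of_nonneg (by linarith : (0:ℝ) ≤ δ/2)]
        linarith
      refine ⟨by linarith, ?_⟩
      intro n hn
      have := Set.mem_iInter.1 hball' n
      exact Set.mem_iInter.1 this hn
    have := le_csSup hbdd hmem
    linarith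
  obtain ⟨m, hm1, hm2, hm0⟩ := hvan
  -- m must be K+1
  rcases Nat.lt_or_ge m (K+1) with hmK | hmK
  · exfalso
    obtain ⟨j, rfl⟩ : ∃ j, m = j + 1 := ⟨m - 1, by omega⟩
    -- recursion at m gives seq (m+1) = - seq (m-1)
    have hrec : seq ε Ω lam T (j+2) = 2 * seq ε Ω lam T (j+1) - seq ε Ω lam T j
        + (Ω/ε) * seq ε Ω lam T (j+1) - (lam/ε) * (seq ε Ω lam T (j+1))^3 := rfl
    rw [hm0] at hrec
    have hj : 0 ≤ seq ε Ω lam T j := hTnn j (by omega)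
    have hj2 : 0 ≤ seq ε Ω lam T (j+2) := hTnn (j+2) (by omega)
    have hz2 : seq ε Ω lam T (j+2) = 0 := by nlinarith [hrec]
    have hT1 : seq ε Ω lam T 1 = 0 := seq_down ε Ω lam T j hm0 hz2
    have : T = 0 := hT1
    linarith
  · have : m = K + 1 := by omega
    subst this
    exact ⟨T, hT0, hm0⟩

end FLSaux

/-- Existence of a nontrivial solution of the stationary equation
`-ε(ψ_{n-1} - 2ψ_n + ψ_{n+1}) + Ω ψ_n = λ ψ_n³` on the finite lattice `{1, …, K}`
with Dirichlet boundary conditions `ψ₀ = ψ_{K+1} = 0`. -/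
theorem finite_lattice_nontrivial_stationary_solution (K : ℕ) (hK : 1 ≤ K)
    (ε Ω lam : ℝ) (hε : 0 < ε) (hΩ : 0 < Ω) (hlam : 0 < lam) :
    ∃ ψ : ℤ → ℝ, ψ 0 = 0 ∧ ψ (K + 1) = 0 ∧
      (∀ n : ℤ, 1 ≤ n → n ≤ K →
        -ε * (ψ (n - 1) - 2 * ψ n + ψ (n + 1)) + Ω * ψ n = lam * ψ n ^ 3) ∧
      ∃ n : ℤ, 1 ≤ n ∧ n ≤ K ∧ ψ n ≠ 0 := by
  obtain ⟨T, hT0, hTK⟩ := FLSaux.key K hK ε Ω lam hε hΩ hlam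
  refine ⟨fun n => FLSaux.seq ε Ω lam T n.toNat, ?_, ?_, ?_, ?_⟩
  · show FLSaux.seq ε Ω lam T (Int.toNat 0) = 0
    rfl
  · show FLSaux.seq ε Ω lam T ((K:ℤ)+1).toNat = 0
    have : ((K:ℤ)+1).toNat = K + 1 := by omega
    rw [this]; exact hTK
  · intro n hn1 hnK
    have hj : ∃ j : ℕ, n = (j:ℤ) + 1 := ⟨(n-1).toNat, by omega⟩
    obtain ⟨j, rfl⟩ := hj
    have e1 : ((j:ℤ) + 1 - 1).toNat = j := by omega
    have e2 : ((j:ℤ) + 1).toNat = j + 1 := by omega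
    have e3 : ((j:ℤ) + 1 + 1).toNat = j + 2 := by omega
    simp only []
    rw [e1, e2, e3]
    exact FLSaux.seq_eq ε Ω lam T (ne_of_gt hε) j
  · refine ⟨1, le_refl _, by exact_mod_cast hK, ?_⟩
    show FLSaux.seq ε Ω lam T (Int.toNat 1) ≠ 0
    exact ne_of_gt hT0
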